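/- Let f : [0,1] → ℝ be a convex continuous function with a unique minimizer x* ∈ (0,1) and f(x*) = 0. For m ∈ ℕ let A_m := {k/2^m : k ∈ {1, …, 2^m − 1}}, and let m* be the smallest m such that A_m ∩ (0, x*] and A_m ∩ [x*, 1) each contain at least 4 elements. For every m ≥ m*, let x_1^m < x_2^m < x_3^m < x_4^m denote the 4 largest elements of A_m ∩ (0, x*] and x_5^m < x_6^m < x_7^m < x_8^m denote the 4 smallest elements of A_m ∩ [x*, 1). Then for every m ≥ m* + 1, max_{i ∈ {1,…,8}} f(x_i^m) ≤ (4/7) · max_{i ∈ {1,…,8}} f(x_i^{m−1}). -/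

import Mathlib

/-- The dyadic mesh of index `m` in `(0,1)`: the points `k / 2^m` for
`k ∈ {1, …, 2^m − 1}`. -/
def dyadicMesh (m : ℕ) : Set ℝ :=
  {y | ∃ k : ℕ, 1 ≤ k ∧ k ≤ 2 ^ m - 1 ∧ y = (k : ℝ) / 2 ^ m}

lemma mesh_gap {n : ℕ} {p q : ℝ} (hp : p ∈ dyadicMesh n) (hq : q ∈ dyadicMesh n)
    (hpq : p < q) : p + 1 / 2 ^ n ≤ q := by
  obtain ⟨k, hk1, hk2, rfl⟩ := hp
  obtain ⟨l, hl1, hl2, rfl⟩ := hq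
  have h2 : (0:ℝ) < 2 ^ n := by positivity
  have hkl : k < l := by
    have : (k:ℝ) < l := by
      rw [div_lt_div_iff₀ h2 h2] at hpq
      exact lt_of_mul_lt_mul_right hpq h2.le
    exact_mod_cast this
  have hk1l : (k:ℝ) + 1 ≤ l := by exact_mod_cast hkl
  rw [← add_div, div_le_div_iff₀ h2 h2]
  nlinarith

lemma mesh_step {n : ℕ} {p q : ℝ} (hp : p ∈ dyadicMesh n) (hq : q ∈ dyadicMesh n)
    (hpq : p < q) : p + 1 / 2 ^ n ∈ dyadicMesh n := by
  obtain ⟨k, hk1, hk2, rfl⟩ := hp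
  obtain ⟨l, hl1, hl2, rfl⟩ := hq
  have h2 : (0:ℝ) < 2 ^ n := by positivity
  have hkl : k < l := by
    have : (k:ℝ) < l := by
      rw [div_lt_div_iff₀ h2 h2] at hpq
      exact lt_of_mul_lt_mul_right hpq h2.le
    exact_mod_cast this
  exact ⟨k + 1, by omega, by omega, by push_cast; ring⟩

lemma mesh_step_down {n : ℕ} {p q : ℝ} (hp : p ∈ dyadicMesh n) (hq : q ∈ dyadicMesh n)
    (hpq : p < q) : q - 1 / 2 ^ n ∈ dyadicMesh n := by
  obtain ⟨k, hk1, hk2, rfl⟩ := hp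
  obtain ⟨l, hl1, hl2, rfl⟩ := hq
  have h2 : (0:ℝ) < 2 ^ n := by positivity
  have hkl : k < l := by
    have : (k:ℝ) < l := by
      rw [div_lt_div_iff₀ h2 h2] at hpq
      exact lt_of_mul_lt_mul_right hpq h2.le
    exact_mod_cast this
  exact ⟨l - 1, by omega, by omega, by rw [Nat.cast_sub hl1]; push_cast; ring⟩

lemma mesh_refine {n : ℕ} (hn : 1 ≤ n) : dyadicMesh (n - 1) ⊆ dyadicMesh n := by
  rintro y ⟨k, hk1, hk2, rfl⟩
  have hpow : 2 ^ (n - 1) * 2 = 2 ^ n := by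
    rw [← pow_succ]; congr 1; omega
  have h1 : 1 ≤ 2 ^ (n - 1) := Nat.one_le_two_pow
  refine ⟨2 * k, by omega, by omega, ?_⟩
  have hpowR : ((2:ℝ)) ^ (n - 1) * 2 = 2 ^ n := by exact_mod_cast hpow
  have hne : ((2:ℝ)) ^ (n - 1) ≠ 0 := by positivity
  rw [← hpowR]
  push_cast
  field_simp

lemma convex_ratio {f : ℝ → ℝ} (hf : ConvexOn ℝ (Set.Icc (0:ℝ) 1) f)
    {xstar y : ℝ} (hx : xstar ∈ Set.Icc (0:ℝ) 1) (hy : y ∈ Set.Icc (0:ℝ) 1)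
    (hzero : f xstar = 0) {t : ℝ} (ht0 : 0 ≤ t) (ht1 : t ≤ 1) :
    f ((1 - t) * xstar + t * y) ≤ t * f y := by
  have := hf.2 hx hy (by linarith : (0:ℝ) ≤ 1 - t) ht0 (by ring)
  simpa [hzero, smul_eq_mul] using this

lemma dec_left {f : ℝ → ℝ} (hf : ConvexOn ℝ (Set.Icc (0:ℝ) 1) f)
    {xstar p q : ℝ} (hx : xstar ∈ Set.Icc (0:ℝ) 1) (hzero : f xstar = 0)
    (hp : p ∈ Set.Icc (0:ℝ) 1) (hfp : 0 ≤ f p)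
    (hpq : p ≤ q) (hqx : q ≤ xstar) : f q ≤ f p := by
  rcases eq_or_lt_of_le (le_trans hpq hqx : p ≤ xstar) with he | hlt
  · have hq : q = xstar := le_antisymm hqx (he ▸ hpq)
    rw [hq, hzero]; exact hfp
  · have hd : 0 < xstar - p := by linarith
    have ht0 : 0 ≤ (xstar - q) / (xstar - p) := div_nonneg (by linarith) hd.le
    have ht1 : (xstar - q) / (xstar - p) ≤ 1 := by rw [div_le_one hd]; linarith
    have hrep : (1 - (xstar - q) / (xstar - p)) * xstar
        + ((xstar - q) / (xstar - p)) * p = q := by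
      field_simp
      ring
    have hk := convex_ratio hf hx hp hzero ht0 ht1
    rw [hrep] at hk
    nlinarith [mul_le_mul_of_nonneg_right ht1 hfp]

lemma inc_right {f : ℝ → ℝ} (hf : ConvexOn ℝ (Set.Icc (0:ℝ) 1) f)
    {xstar p q : ℝ} (hx : xstar ∈ Set.Icc (0:ℝ) 1) (hzero : f xstar = 0)
    (hp : p ∈ Set.Icc (0:ℝ) 1) (hfp : 0 ≤ f p)
    (hqp : q ≤ p) (hxq : xstar ≤ q) : f q ≤ f p := by
  rcases eq_or_lt_of_le (le_trans hxq hqp : xstar ≤ p) with he | hlt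
  · have hq : q = xstar := le_antisymm (he ▸ hqp) hxq
    rw [hq, hzero]; exact hfp
  · have hd : 0 < p - xstar := by linarith
    have ht0 : 0 ≤ (q - xstar) / (p - xstar) := div_nonneg (by linarith) hd.le
    have ht1 : (q - xstar) / (p - xstar) ≤ 1 := by rw [div_le_one hd]; linarith
    have hrep : (1 - (q - xstar) / (p - xstar)) * xstar
        + ((q - xstar) / (p - xstar)) * p = q := by
      field_simp
      ring
    have hk := convex_ratio hf hx hp hzero ht0 ht1
    rw [hrep] at hk
    nlinarith [mul_le_mul_of_nonneg_right ht1 hfp]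

lemma left_struct {n : ℕ} {x a0 a1 a2 a3 q : ℝ}
    (h01 : a0 < a1) (h12 : a1 < a2) (h23 : a2 < a3)
    (m0 : a0 ∈ dyadicMesh n ∩ Set.Ioc 0 x)
    (m3 : a3 ∈ dyadicMesh n ∩ Set.Ioc 0 x)
    (h4 : (dyadicMesh n ∩ Set.Ioc 0 x) ∩ Set.Ioi a0 = {a1, a2, a3})
    (hq : q ∈ dyadicMesh n) (hq3 : a3 < q) :
    a3 = a0 + 3 * (1 / 2 ^ n) ∧ (∀ p ∈ dyadicMesh n ∩ Set.Ioc 0 x, p ≤ a3) ∧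
      x < a3 + 1 / 2 ^ n := by
  have hpos : (0:ℝ) < 1 / 2 ^ n := by positivity
  have hs : ∀ r, r ∈ dyadicMesh n → 0 < r → r ≤ x → a0 < r →
      r = a1 ∨ r = a2 ∨ r = a3 := by
    intro r h1 h2 h3 h4'
    have : r ∈ ({a1, a2, a3} : Set ℝ) := by rw [← h4]; exact ⟨⟨h1, h2, h3⟩, h4'⟩
    simpa using this
  have m1 : a1 ∈ dyadicMesh n ∩ Set.Ioc 0 x := by
    have : a1 ∈ ({a1, a2, a3} : Set ℝ) := by simp
    rw [← h4] at this; exact this.1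
  have m2 : a2 ∈ dyadicMesh n ∩ Set.Ioc 0 x := by
    have : a2 ∈ ({a1, a2, a3} : Set ℝ) := by simp
    rw [← h4] at this; exact this.1
  have hmax : ∀ p ∈ dyadicMesh n ∩ Set.Ioc 0 x, p ≤ a3 := by
    intro p hp
    by_contra hc
    push_neg at hc
    rcases hs p hp.1 hp.2.1 hp.2.2 (by linarith) with h | h | h <;> linarith
  have g01 : a0 + 1 / 2 ^ n ≤ a1 := mesh_gap m0.1 m1.1 h01
  have e1 : a1 = a0 + 1 / 2 ^ n := by
    have hst := mesh_step m0.1 m1.1 h01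
    rcases hs _ hst (by linarith [m0.2.1]) (by linarith [m1.2.2]) (by linarith)
      with h | h | h <;> linarith
  have g12 : a1 + 1 / 2 ^ n ≤ a2 := mesh_gap m1.1 m2.1 h12
  have e2 : a2 = a1 + 1 / 2 ^ n := by
    have hst := mesh_step m1.1 m2.1 h12
    rcases hs _ hst (by linarith [m0.2.1]) (by linarith [m2.2.2]) (by linarith)
      with h | h | h <;> linarith
  have g23 : a2 + 1 / 2 ^ n ≤ a3 := mesh_gap m2.1 m3.1 h23
  have e3 : a3 = a2 + 1 / 2 ^ n := by
    have hst := mesh_step m2.1 m3.1 h23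
    rcases hs _ hst (by linarith [m0.2.1]) (by linarith [m3.2.2]) (by linarith)
      with h | h | h <;> linarith
  refine ⟨by linarith, hmax, ?_⟩
  by_contra hc
  push_neg at hc
  have hst := mesh_step m3.1 hq hq3
  rcases hs _ hst (by linarith [m0.2.1]) hc (by linarith) with h | h | h <;> linarith

lemma right_struct {n : ℕ} {x b4 b5 b6 b7 q : ℝ}
    (h45 : b4 < b5) (h56 : b5 < b6) (h67 : b6 < b7)
    (m4 : b4 ∈ dyadicMesh n ∩ Set.Ico x 1)
    (m7 : b7 ∈ dyadicMesh n ∩ Set.Ico x 1)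
    (h4 : (dyadicMesh n ∩ Set.Ico x 1) ∩ Set.Iio b7 = {b4, b5, b6})
    (hq : q ∈ dyadicMesh n) (hq4 : q < b4) :
    b7 = b4 + 3 * (1 / 2 ^ n) ∧ (∀ p ∈ dyadicMesh n ∩ Set.Ico x 1, b4 ≤ p) ∧
      b4 - 1 / 2 ^ n < x := by
  have hpos : (0:ℝ) < 1 / 2 ^ n := by positivity
  have hs : ∀ r, r ∈ dyadicMesh n → x ≤ r → r < 1 → r < b7 →
      r = b4 ∨ r = b5 ∨ r = b6 := by
    intro r h1 h2 h3 h4'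
    have : r ∈ ({b4, b5, b6} : Set ℝ) := by rw [← h4]; exact ⟨⟨h1, h2, h3⟩, h4'⟩
    simpa using this
  have m5 : b5 ∈ dyadicMesh n ∩ Set.Ico x 1 := by
    have : b5 ∈ ({b4, b5, b6} : Set ℝ) := by simp
    rw [← h4] at this; exact this.1
  have m6 : b6 ∈ dyadicMesh n ∩ Set.Ico x 1 := by
    have : b6 ∈ ({b4, b5, b6} : Set ℝ) := by simp
    rw [← h4] at this; exact this.1
  have hminp : ∀ p ∈ dyadicMesh n ∩ Set.Ico x 1, b4 ≤ p := by
    intro p hp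
    by_contra hc
    push_neg at hc
    rcases hs p hp.1 hp.2.1 hp.2.2 (by linarith) with h | h | h <;> linarith
  have g45 : b4 + 1 / 2 ^ n ≤ b5 := mesh_gap m4.1 m5.1 h45
  have e5 : b5 = b4 + 1 / 2 ^ n := by
    have hst := mesh_step m4.1 m5.1 h45
    rcases hs _ hst (by linarith [m4.2.1]) (by linarith [m7.2.2]) (by linarith)
      with h | h | h <;> linarith
  have g56 : b5 + 1 / 2 ^ n ≤ b6 := mesh_gap m5.1 m6.1 h56
  have e6 : b6 = b5 + 1 / 2 ^ n := by
    have hst := mesh_step m5.1 m6.1 h56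
    rcases hs _ hst (by linarith [m4.2.1]) (by linarith [m7.2.2]) (by linarith)
      with h | h | h <;> linarith
  have g67 : b6 + 1 / 2 ^ n ≤ b7 := mesh_gap m6.1 m7.1 h67
  have e7 : b7 = b6 + 1 / 2 ^ n := by
    rcases eq_or_lt_of_le g67 with h | h
    · linarith
    · exfalso
      have hst := mesh_step m6.1 m7.1 h67
      rcases hs _ hst (by linarith [m4.2.1]) (by linarith [m7.2.2]) h
        with hh | hh | hh <;> linarith
  refine ⟨by linarith, hminp, ?_⟩
  by_contra hc
  push_neg at hc
  have hst := mesh_step_down hq m4.1 hq4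
  rcases hs _ hst hc (by linarith [m4.2.2]) (by linarith) with h | h | h <;> linarith
/-- Claim 3 of the paper.  For a convex continuous `f : [0,1] → ℝ` with unique
minimizer `x* ∈ (0,1)` and `f(x*) = 0`, let `m*` be the smallest index such
that the dyadic mesh of index `m*` has at least 4 points on each side of `x*`
inside `(0,1)`.  For `m ≥ m* + 1`, let `u 0 < ⋯ < u 3 ≤ x*` be the 4 largest
mesh points of index `m` in `(0, x*]` and `x* ≤ u 4 < ⋯ < u 7` the 4 smallest
mesh points of index `m` in `[x*, 1)` (similarly `v` for index `m − 1`).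
Then `max_i f(u i) ≤ (4/7) · max_i f(v i)`. -/
theorem claim3_dyadic_contraction
    (f : ℝ → ℝ) (hf : ConvexOn ℝ (Set.Icc (0 : ℝ) 1) f)
    (hcont : ContinuousOn f (Set.Icc (0 : ℝ) 1))
    (xstar : ℝ) (hxstar : xstar ∈ Set.Ioo (0 : ℝ) 1)
    (hmin : ∀ y ∈ Set.Icc (0 : ℝ) 1, f xstar ≤ f y)
    (huniq : ∀ y ∈ Set.Icc (0 : ℝ) 1, f y = f xstar → y = xstar)
    (hzero : f xstar = 0)
    (mstar : ℕ)
    (hmstar : IsLeast {m : ℕ | 4 ≤ (dyadicMesh m ∩ Set.Ioc 0 xstar).ncard ∧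
        4 ≤ (dyadicMesh m ∩ Set.Ico xstar 1).ncard} mstar)
    (m : ℕ) (hm : mstar + 1 ≤ m)
    (u v : Fin 8 → ℝ) (hu_mono : StrictMono u) (hv_mono : StrictMono v)
    (hu_left : ∀ i : Fin 8, i ≤ 3 → u i ∈ dyadicMesh m ∩ Set.Ioc 0 xstar)
    (hu_left4 : (dyadicMesh m ∩ Set.Ioc 0 xstar) ∩ Set.Ioi (u 0)
      = {u 1, u 2, u 3})
    (hu_right : ∀ i : Fin 8, 4 ≤ i → u i ∈ dyadicMesh m ∩ Set.Ico xstar 1)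
    (hu_right4 : (dyadicMesh m ∩ Set.Ico xstar 1) ∩ Set.Iio (u 7)
      = {u 4, u 5, u 6})
    (hv_left : ∀ i : Fin 8, i ≤ 3 → v i ∈ dyadicMesh (m - 1) ∩ Set.Ioc 0 xstar)
    (hv_left4 : (dyadicMesh (m - 1) ∩ Set.Ioc 0 xstar) ∩ Set.Ioi (v 0)
      = {v 1, v 2, v 3})
    (hv_right : ∀ i : Fin 8, 4 ≤ i →
      v i ∈ dyadicMesh (m - 1) ∩ Set.Ico xstar 1)
    (hv_right4 : (dyadicMesh (m - 1) ∩ Set.Ico xstar 1) ∩ Set.Iio (v 7)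
      = {v 4, v 5, v 6}) :
    Finset.univ.sup' Finset.univ_nonempty (fun i => f (u i)) ≤
      4 / 7 * Finset.univ.sup' Finset.univ_nonempty (fun i => f (v i)) := by
  
  have hm1 : 1 ≤ m := by omega
  have hpos : (0:ℝ) < 1 / 2 ^ m := by positivity
  have hH : (1:ℝ) / 2 ^ (m - 1) = 2 * (1 / 2 ^ m) := by
    have h2 : (2:ℝ) ^ m = 2 ^ (m - 1) * 2 := by
      rw [← pow_succ]; congr 1; omega
    have hne : ((2:ℝ)) ^ (m - 1) ≠ 0 := by positivity
    rw [h2]; field_simp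
  have hxmem : xstar ∈ Set.Icc (0:ℝ) 1 := ⟨hxstar.1.le, hxstar.2.le⟩
  have hf0 : ∀ y ∈ Set.Icc (0:ℝ) 1, 0 ≤ f y := fun y hy => hzero ▸ hmin y hy
  have mu0 := hu_left 0 (by decide)
  have mu3 := hu_left 3 (le_refl _)
  have mu4 := hu_right 4 (le_refl _)
  have mu7 := hu_right 7 (by decide)
  have mv0 := hv_left 0 (by decide)
  have mv3 := hv_left 3 (le_refl _)
  have mv4 := hv_right 4 (le_refl _)
  have mv7 := hv_right 7 (by decide)
  obtain ⟨hu3eq, humax, hux⟩ := left_struct (hu_mono (by decide)) (hu_mono (by decide))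
    (hu_mono (by decide)) mu0 mu3 hu_left4 mu4.1 (hu_mono (by decide))
  obtain ⟨hv3eq, hvmax, hvx⟩ := left_struct (hv_mono (by decide)) (hv_mono (by decide))
    (hv_mono (by decide)) mv0 mv3 hv_left4 mv4.1 (hv_mono (by decide))
  obtain ⟨hu7eq, humin, hux'⟩ := right_struct (hu_mono (by decide)) (hu_mono (by decide))
    (hu_mono (by decide)) mu4 mu7 hu_right4 mu3.1 (hu_mono (by decide))
  obtain ⟨hv7eq, hvmin, hvx'⟩ := right_struct (hv_mono (by decide)) (hv_mono (by decide))
    (hv_mono (by decide)) mv4 mv7 hv_right4 mv3.1 (hv_mono (by decide))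
  rw [hH] at hv3eq hvx hv7eq hvx'
  have hv3u3 : v 3 ≤ u 3 := humax _ ⟨mesh_refine hm1 mv3.1, mv3.2⟩
  have hu4v4 : u 4 ≤ v 4 := humin _ ⟨mesh_refine hm1 mv4.1, mv4.2⟩
  -- left bound
  have mv0Icc : v 0 ∈ Set.Icc (0:ℝ) 1 := ⟨mv0.2.1.le, mv0.2.2.trans hxstar.2.le⟩
  have mu0Icc : u 0 ∈ Set.Icc (0:ℝ) 1 := ⟨mu0.2.1.le, mu0.2.2.trans hxstar.2.le⟩
  have hb : 0 < xstar - v 0 := by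
    have := mv3.2.2
    linarith [hv3eq]
  have ht0 : 0 ≤ (xstar - u 0) / (xstar - v 0) :=
    div_nonneg (by linarith [mu0.2.2]) hb.le
  have ht47 : (xstar - u 0) / (xstar - v 0) ≤ 4 / 7 := by
    rw [div_le_iff₀ hb]
    have h1 : xstar - u 3 ≤ xstar - v 3 := by linarith
    have h2 : xstar - u 3 < 1 / 2 ^ m := by linarith
    linarith [hu3eq, hv3eq]
  have ht1 : (xstar - u 0) / (xstar - v 0) ≤ 1 := ht47.trans (by norm_num)
  have hrep : (1 - (xstar - u 0) / (xstar - v 0)) * xstar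
      + ((xstar - u 0) / (xstar - v 0)) * v 0 = u 0 := by
    field_simp
    ring
  have hL : f (u 0) ≤ 4 / 7 * f (v 0) := by
    have hk := convex_ratio hf hxmem mv0Icc hzero ht0 ht1
    rw [hrep] at hk
    have hnn := hf0 (v 0) mv0Icc
    nlinarith [mul_le_mul_of_nonneg_right ht47 hnn]
  -- right bound
  have mv7Icc : v 7 ∈ Set.Icc (0:ℝ) 1 := ⟨hxstar.1.le.trans mv7.2.1, mv7.2.2.le⟩
  have mu7Icc : u 7 ∈ Set.Icc (0:ℝ) 1 := ⟨hxstar.1.le.trans mu7.2.1, mu7.2.2.le⟩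
  have hb' : 0 < v 7 - xstar := by
    have := mv4.2.1
    linarith [hv7eq]
  have ht0' : 0 ≤ (u 7 - xstar) / (v 7 - xstar) :=
    div_nonneg (by linarith [mu7.2.1]) hb'.le
  have ht47' : (u 7 - xstar) / (v 7 - xstar) ≤ 4 / 7 := by
    rw [div_le_iff₀ hb']
    have h1 : u 4 - xstar ≤ v 4 - xstar := by linarith
    have h2 : u 4 - xstar < 1 / 2 ^ m := by linarith
    linarith [hu7eq, hv7eq]
  have ht1' : (u 7 - xstar) / (v 7 - xstar) ≤ 1 := ht47'.trans (by norm_num)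
  have hrep' : (1 - (u 7 - xstar) / (v 7 - xstar)) * xstar
      + ((u 7 - xstar) / (v 7 - xstar)) * v 7 = u 7 := by
    field_simp
    ring
  have hR : f (u 7) ≤ 4 / 7 * f (v 7) := by
    have hk := convex_ratio hf hxmem mv7Icc hzero ht0' ht1'
    rw [hrep'] at hk
    have hnn := hf0 (v 7) mv7Icc
    nlinarith [mul_le_mul_of_nonneg_right ht47' hnn]
  -- conclude
  apply Finset.sup'_le
  intro i _
  rcases le_or_gt i 3 with hi | hi
  · have h1 : f (u i) ≤ f (u 0) :=
      dec_left hf hxmem hzero mu0Icc (hf0 _ mu0Icc)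
        (hu_mono.monotone (Fin.zero_le i)) (hu_left i hi).2.2
    have h2 : f (v 0) ≤ Finset.univ.sup' Finset.univ_nonempty (fun j => f (v j)) :=
      Finset.le_sup' (fun j => f (v j)) (Finset.mem_univ 0)
    linarith
  · have hi4 : (4:Fin 8) ≤ i := by
      have h3 : ((3:Fin 8)).val = 3 := rfl
      have h4 : ((4:Fin 8)).val = 4 := rfl
      rw [Fin.le_def, h4]
      rw [Fin.lt_def, h3] at hi
      omega
    have hi7 : i ≤ 7 := by
      have h7 : ((7:Fin 8)).val = 7 := rfl
      rw [Fin.le_def, h7]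
      have := i.isLt
      omega
    have h1 : f (u i) ≤ f (u 7) :=
      inc_right hf hxmem hzero mu7Icc (hf0 _ mu7Icc)
        (hu_mono.monotone hi7) (hu_right i hi4).2.1
    have h2 : f (v 7) ≤ Finset.univ.sup' Finset.univ_nonempty (fun j => f (v j)) :=
      Finset.le_sup' (fun j => f (v j)) (Finset.mem_univ 7)
    linarith
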